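/- For any teleportation assemblage {σ_{a|ω_x}} arising from a shared state ρ^{AB}, a POVM {M_a^{VA}} and input states {ω_x}, the teleportation weight is bounded by the best separable approximation of the shared state: TW({σ_{a|ω_x}}) ≤ ε_BSA(ρ^{AB}). -/

import Mathlib

open Matrix ComplexOrder
open scoped Kronecker

namespace Tele

noncomputable def ptrace₁ {V B : Type*} [Fintype V]
    (M : Matrix (V × B) (V × B) ℂ) : Matrix B B ℂ :=
  Matrix.of fun b b' => ∑ v, M (v, b) (v, b')

noncomputable def ptrace₂ {V B : Type*} [Fintype B]
    (M : Matrix (V × B) (V × B) ℂ) : Matrix V V ℂ :=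
  Matrix.of fun v v' => ∑ b, M (v, b) (v', b)

noncomputable def ptraceMid {V A B : Type*} [Fintype A]
    (M : Matrix (V × A × B) (V × A × B) ℂ) : Matrix (V × B) (V × B) ℂ :=
  Matrix.of fun p q => ∑ a, M (p.1, a, p.2) (q.1, a, q.2)

noncomputable def ptraceVA {V A B : Type*} [Fintype V] [Fintype A]
    (M : Matrix (V × A × B) (V × A × B) ℂ) : Matrix B B ℂ :=
  Matrix.of fun b b' => ∑ v, ∑ a, M (v, a, b) (v, a, b')

noncomputable def ptraceV₁A {V V₁ A B : Type*} [Fintype V₁] [Fintype A]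
    (M : Matrix (V × V₁ × A × B) (V × V₁ × A × B) ℂ) : Matrix (V × B) (V × B) ℂ :=
  Matrix.of fun p q => ∑ v₁, ∑ a, M (p.1, v₁, a, p.2) (q.1, v₁, a, q.2)

def ptranspose₁ {V B : Type*} (M : Matrix (V × B) (V × B) ℂ) : Matrix (V × B) (V × B) ℂ :=
  Matrix.of fun p q => M (q.1, p.2) (p.1, q.2)

def ptranspose₂ {V B : Type*} (M : Matrix (V × B) (V × B) ℂ) : Matrix (V × B) (V × B) ℂ :=
  Matrix.of fun p q => M (p.1, q.2) (q.1, p.2)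

def Separable {V B : Type*} [Fintype V] [Fintype B]
    (M : Matrix (V × B) (V × B) ℂ) : Prop :=
  ∃ (n : ℕ) (τ : Fin n → Matrix V V ℂ) (χ : Fin n → Matrix B B ℂ),
    (∀ i, (τ i).PosSemidef) ∧ (∀ i, (χ i).PosSemidef) ∧ M = ∑ i, τ i ⊗ₖ χ i

def IsState {V : Type*} [Fintype V] (ρ : Matrix V V ℂ) : Prop :=
  ρ.PosSemidef ∧ ρ.trace = 1

noncomputable def maxEnt (d : ℕ) : Matrix (Fin d × Fin d) (Fin d × Fin d) ℂ :=
  Matrix.of fun p q => if p.1 = p.2 ∧ q.1 = q.2 then (d : ℂ)⁻¹ else 0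

noncomputable def chanOp {V A B : Type*} [Fintype V] [Fintype A] [Fintype B]
    [DecidableEq V] [DecidableEq B]
    (M : Matrix (V × A) (V × A) ℂ) (ρ : Matrix (A × B) (A × B) ℂ) :
    Matrix (V × B) (V × B) ℂ :=
  ptraceMid ((Matrix.reindex (Equiv.prodAssoc V A B) (Equiv.prodAssoc V A B)
      (M ⊗ₖ (1 : Matrix B B ℂ))) * ((1 : Matrix V V ℂ) ⊗ₖ ρ))

noncomputable def teleA {V A B : Type*} [Fintype V] [Fintype A] [Fintype B] [DecidableEq B]
    (M : Matrix (V × A) (V × A) ℂ) (ρ : Matrix (A × B) (A × B) ℂ) (ω : Matrix V V ℂ) :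
    Matrix B B ℂ :=
  ptraceVA ((Matrix.reindex (Equiv.prodAssoc V A B) (Equiv.prodAssoc V A B)
      (M ⊗ₖ (1 : Matrix B B ℂ))) * (ω ⊗ₖ ρ))

noncomputable def margOp {V A : Type*} [Fintype V] [Fintype A] [DecidableEq V]
    (M : Matrix (V × A) (V × A) ℂ) (ρA : Matrix A A ℂ) : Matrix V V ℂ :=
  ptrace₂ (M * ((1 : Matrix V V ℂ) ⊗ₖ ρA))

noncomputable def piOp {A B : Type*} [Fintype A] [Fintype B] [DecidableEq B]
    (χ : Matrix A A ℂ) (ρ : Matrix (A × B) (A × B) ℂ) : Matrix B B ℂ :=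
  ptrace₁ ((χ ⊗ₖ (1 : Matrix B B ℂ)) * ρ)

def TomoComplete {V X : Type*} [Fintype V] (ω : X → Matrix V V ℂ) : Prop :=
  ∀ H : Matrix V V ℂ, H.IsHermitian → H ∈ Submodule.span ℝ (Set.range ω)

noncomputable def shiftX (d : ℕ) : Matrix (Fin d) (Fin d) ℂ :=
  Matrix.of fun i j => if (i : ℕ) = ((j : ℕ) + 1) % d then 1 else 0

noncomputable def clockZ (d : ℕ) : Matrix (Fin d) (Fin d) ℂ :=
  Matrix.of fun i j =>
    if i = j then Complex.exp (2 * (Real.pi : ℂ) * Complex.I * ((i : ℕ) : ℂ) / (d : ℂ)) else 0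

noncomputable def HW (d : ℕ) (a : Fin d × Fin d) : Matrix (Fin d) (Fin d) ℂ :=
  shiftX d ^ (a.1 : ℕ) * clockZ d ^ (a.2 : ℕ)

noncomputable def bellPOVM (d : ℕ) (a : Fin d × Fin d) :
    Matrix (Fin d × Fin d) (Fin d × Fin d) ℂ :=
  (HW d a ⊗ₖ (1 : Matrix (Fin d) (Fin d) ℂ)) * maxEnt d *
    ((HW d a)ᴴ ⊗ₖ (1 : Matrix (Fin d) (Fin d) ℂ))

noncomputable def negativity {A B : Type*} [Fintype A] [Fintype B]
    (ρ : Matrix (A × B) (A × B) ℂ) : ℝ :=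
  sInf {t : ℝ | ∃ ρp ρm : Matrix (A × B) (A × B) ℂ,
    ρ = ρp - ρm ∧ (ptranspose₁ ρp).PosSemidef ∧ (ptranspose₁ ρm).PosSemidef ∧
    t = (ρm.trace).re}

noncomputable def epsGen {A B : Type*} [Fintype A] [Fintype B]
    (ρ : Matrix (A × B) (A × B) ℂ) : ℝ :=
  sInf {r : ℝ | 0 ≤ r ∧ ∃ ρs : Matrix (A × B) (A × B) ℂ, IsState ρs ∧
    Separable ((((1 + r : ℝ) : ℂ))⁻¹ • (ρ + ((r : ℝ) : ℂ) • ρs))}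

noncomputable def epsSep {A B : Type*} [Fintype A] [Fintype B]
    (ρ : Matrix (A × B) (A × B) ℂ) : ℝ :=
  sInf {r : ℝ | 0 ≤ r ∧ ∃ ρs : Matrix (A × B) (A × B) ℂ, IsState ρs ∧ Separable ρs ∧
    Separable ((((1 + r : ℝ) : ℂ))⁻¹ • (ρ + ((r : ℝ) : ℂ) • ρs))}

noncomputable def epsR {A B : Type*} [Fintype A] [Fintype B] [DecidableEq A] [DecidableEq B]
    (ρ : Matrix (A × B) (A × B) ℂ) : ℝ :=
  sInf {r : ℝ | 0 ≤ r ∧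
    Separable ((((1 + r : ℝ) : ℂ))⁻¹ •
      (ρ + ((r : ℝ) : ℂ) • ((Fintype.card (A × B) : ℂ)⁻¹ • (1 : Matrix (A × B) (A × B) ℂ))))}

noncomputable def epsBSA {A B : Type*} [Fintype A] [Fintype B]
    (ρ : Matrix (A × B) (A × B) ℂ) : ℝ :=
  sInf {p : ℝ | 0 ≤ p ∧ p ≤ 1 ∧ ∃ ρs σS : Matrix (A × B) (A × B) ℂ,
    IsState ρs ∧ IsState σS ∧ Separable σS ∧
    ρ = ((p : ℝ) : ℂ) • ρs + (((1 - p : ℝ)) : ℂ) • σS}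

noncomputable def tauGen {V B X ι : Type*} [Fintype V] [Fintype B] [Fintype ι]
    [DecidableEq V] [DecidableEq B]
    (ω : X → Matrix V V ℂ) (σ : ι → X → Matrix B B ℂ) : ℝ :=
  sInf {r : ℝ | 0 ≤ r ∧ ∃ (m : ℕ) (ρs : Matrix (Fin m × B) (Fin m × B) ℂ)
      (N : ι → Matrix (V × Fin m) (V × Fin m) ℂ) (Ms : ι → Matrix (V × B) (V × B) ℂ),
      IsState ρs ∧ (∀ a, (N a).PosSemidef) ∧ ((∑ a, N a) = 1) ∧
      (∀ a, (Ms a).PosSemidef ∧ Separable (Ms a)) ∧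
      (∀ a x, (((1 + r : ℝ) : ℂ))⁻¹ • (σ a x + ((r : ℝ) : ℂ) • teleA (N a) ρs (ω x)) =
        ptrace₁ (Ms a * (ω x ⊗ₖ (1 : Matrix B B ℂ)))) ∧
      (∀ x, (∑ a, Ms a) = (1 : Matrix V V ℂ) ⊗ₖ
        ((((1 + r : ℝ) : ℂ))⁻¹ •
          ((∑ a, σ a x) + ((r : ℝ) : ℂ) • ∑ a, teleA (N a) ρs (ω x))))}

noncomputable def tauCl {V B X ι : Type*} [Fintype V] [Fintype B] [Fintype ι]
    [DecidableEq V] [DecidableEq B]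
    (ω : X → Matrix V V ℂ) (σ : ι → X → Matrix B B ℂ) : ℝ :=
  sInf {r : ℝ | 0 ≤ r ∧ ∃ (Mb Ms : ι → Matrix (V × B) (V × B) ℂ),
    (∀ a, (Mb a).PosSemidef ∧ Separable (Mb a)) ∧
    (∀ a, (Ms a).PosSemidef ∧ Separable (Ms a)) ∧
    (∀ x, (∑ a, Mb a) = (1 : Matrix V V ℂ) ⊗ₖ
      (∑ a, ptrace₁ (Mb a * (ω x ⊗ₖ (1 : Matrix B B ℂ))))) ∧
    (∀ a x, (((1 + r : ℝ) : ℂ))⁻¹ •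
        (σ a x + ((r : ℝ) : ℂ) • ptrace₁ (Mb a * (ω x ⊗ₖ (1 : Matrix B B ℂ)))) =
      ptrace₁ (Ms a * (ω x ⊗ₖ (1 : Matrix B B ℂ)))) ∧
    (∀ x, (∑ a, Ms a) = (1 : Matrix V V ℂ) ⊗ₖ
      ((((1 + r : ℝ) : ℂ))⁻¹ •
        ((∑ a, σ a x) + ((r : ℝ) : ℂ) •
          ∑ a, ptrace₁ (Mb a * (ω x ⊗ₖ (1 : Matrix B B ℂ))))))}

noncomputable def tauR {V B X ι : Type*} [Fintype V] [Fintype B] [Fintype ι]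
    [DecidableEq V] [DecidableEq B]
    (ω : X → Matrix V V ℂ) (σ : ι → X → Matrix B B ℂ) : ℝ :=
  sInf {r : ℝ | 0 ≤ r ∧ ∃ (p : ι → ℝ) (Ms : ι → Matrix (V × B) (V × B) ℂ),
    (∀ a, 0 ≤ p a) ∧ ((∑ a, p a) = 1) ∧
    (∀ a, (Ms a).PosSemidef ∧ Separable (Ms a)) ∧
    (∀ a x, (((1 + r : ℝ) : ℂ))⁻¹ •
        (σ a x + ((r * p a : ℝ) : ℂ) • ((Fintype.card B : ℂ)⁻¹ • (1 : Matrix B B ℂ))) =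
      ptrace₁ (Ms a * (ω x ⊗ₖ (1 : Matrix B B ℂ)))) ∧
    (∀ x, (∑ a, Ms a) = (1 : Matrix V V ℂ) ⊗ₖ
      ((((1 + r : ℝ) : ℂ))⁻¹ •
        ((∑ a, σ a x) + ((r : ℝ) : ℂ) • ((Fintype.card B : ℂ)⁻¹ • (1 : Matrix B B ℂ)))))}

noncomputable def TW {V B X ι : Type*} [Fintype V] [Fintype B] [Fintype ι]
    [DecidableEq B]
    (ω : X → Matrix V V ℂ) (σ : ι → X → Matrix B B ℂ) : ℝ :=
  sInf {p : ℝ | 0 ≤ p ∧ p ≤ 1 ∧ ∃ (Mt Mb : ι → Matrix (V × B) (V × B) ℂ),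
    (∀ a, (Mb a).PosSemidef ∧ Separable (Mb a)) ∧
    (∀ a, (ptranspose₁ (Mt a)).PosSemidef) ∧
    (∀ x x', (∑ a, ptrace₁ (Mt a * (ω x ⊗ₖ (1 : Matrix B B ℂ)))) =
      ∑ a, ptrace₁ (Mt a * (ω x' ⊗ₖ (1 : Matrix B B ℂ)))) ∧
    (∀ a x, σ a x = ptrace₁
      ((((p : ℝ) : ℂ) • Mt a + (((1 - p : ℝ)) : ℂ) • Mb a) * (ω x ⊗ₖ (1 : Matrix B B ℂ))))}

section Aux

set_option linter.unusedSectionVars false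

variable {V A B : Type*} [Fintype V] [Fintype A] [Fintype B] [DecidableEq V] [DecidableEq B]

private lemma sum4_swap {ι₁ ι₂ ι₃ ι₄ : Type*} [Fintype ι₁] [Fintype ι₂] [Fintype ι₃]
    [Fintype ι₄] (f : ι₁ → ι₂ → ι₃ → ι₄ → ℂ) :
    ∑ a, ∑ b, ∑ c, ∑ d, f a b c d = ∑ c, ∑ d, ∑ a, ∑ b, f a b c d :=
  calc ∑ a, ∑ b, ∑ c, ∑ d, f a b c d
      = ∑ a, ∑ c, ∑ b, ∑ d, f a b c d :=
        Finset.sum_congr rfl fun _ _ => Finset.sum_comm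
    _ = ∑ c, ∑ a, ∑ b, ∑ d, f a b c d := Finset.sum_comm
    _ = ∑ c, ∑ a, ∑ d, ∑ b, f a b c d :=
        Finset.sum_congr rfl fun _ _ => Finset.sum_congr rfl fun _ _ => Finset.sum_comm
    _ = ∑ c, ∑ d, ∑ a, ∑ b, f a b c d :=
        Finset.sum_congr rfl fun _ _ => Finset.sum_comm

lemma chanOp_apply (M : Matrix (V × A) (V × A) ℂ) (ρ : Matrix (A × B) (A × B) ℂ)
    (v v' : V) (b b' : B) :
    chanOp M ρ (v, b) (v', b') = ∑ a, ∑ c, M (v, a) (v', c) * ρ (c, b) (a, b') := by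
  simp [chanOp, ptraceMid, Matrix.mul_apply, Matrix.reindex_apply, Matrix.submatrix_apply,
    Equiv.prodAssoc, Matrix.kroneckerMap_apply, Matrix.one_apply, Fintype.sum_prod_type,
    mul_ite, mul_zero, ite_mul, zero_mul, Finset.sum_ite_eq, Finset.sum_ite_eq']

lemma ptrace₁_mul_kron_apply (N : Matrix (V × B) (V × B) ℂ) (ω : Matrix V V ℂ) (b b' : B) :
    ptrace₁ (N * (ω ⊗ₖ (1 : Matrix B B ℂ))) b b' = ∑ v, ∑ v', N (v, b) (v', b') * ω v' v := by
  simp [ptrace₁, Matrix.mul_apply, Matrix.kroneckerMap_apply, Matrix.one_apply,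
    Fintype.sum_prod_type, mul_ite, mul_zero, Finset.sum_ite_eq, Finset.sum_ite_eq', mul_comm]

lemma margOp_apply (M : Matrix (V × A) (V × A) ℂ) (τ : Matrix A A ℂ) (v v' : V) :
    margOp M τ v v' = ∑ a, ∑ c, M (v, a) (v', c) * τ c a := by
  simp [margOp, ptrace₂, Matrix.mul_apply, Matrix.kroneckerMap_apply, Matrix.one_apply,
    Fintype.sum_prod_type, mul_ite, mul_zero, ite_mul, zero_mul, Finset.sum_ite_eq,
    Finset.sum_ite_eq']

lemma teleA_eq (M : Matrix (V × A) (V × A) ℂ) (ρ : Matrix (A × B) (A × B) ℂ)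
    (ω : Matrix V V ℂ) :
    teleA M ρ ω = ptrace₁ (chanOp M ρ * (ω ⊗ₖ (1 : Matrix B B ℂ))) := by
  ext b b'
  rw [ptrace₁_mul_kron_apply]
  simp only [chanOp_apply]
  simp [teleA, ptraceVA, Matrix.mul_apply, Matrix.reindex_apply, Matrix.submatrix_apply,
    Equiv.prodAssoc, Matrix.kroneckerMap_apply, Matrix.one_apply, Fintype.sum_prod_type,
    mul_ite, mul_zero, ite_mul, zero_mul, Finset.sum_ite_eq, Finset.sum_ite_eq']
  refine Finset.sum_congr rfl fun v _ => ?_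
  rw [Finset.sum_comm]
  refine Finset.sum_congr rfl fun u _ => ?_
  rw [Finset.sum_mul]
  refine Finset.sum_congr rfl fun a _ => ?_
  rw [Finset.sum_mul]
  refine Finset.sum_congr rfl fun c _ => ?_
  ring

lemma chanOp_zero (M : Matrix (V × A) (V × A) ℂ) :
    chanOp M (0 : Matrix (A × B) (A × B) ℂ) = 0 := by
  ext ⟨v, b⟩ ⟨v', b'⟩
  simp [chanOp_apply]

lemma chanOp_add (M : Matrix (V × A) (V × A) ℂ) (ρ₁ ρ₂ : Matrix (A × B) (A × B) ℂ) :
    chanOp M (ρ₁ + ρ₂) = chanOp M ρ₁ + chanOp M ρ₂ := by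
  ext ⟨v, b⟩ ⟨v', b'⟩
  simp [chanOp_apply, Matrix.add_apply, mul_add, Finset.sum_add_distrib]

lemma chanOp_smul (M : Matrix (V × A) (V × A) ℂ) (c : ℂ) (ρ : Matrix (A × B) (A × B) ℂ) :
    chanOp M (c • ρ) = c • chanOp M ρ := by
  ext ⟨v, b⟩ ⟨v', b'⟩
  simp only [chanOp_apply, Matrix.smul_apply, smul_eq_mul, Finset.mul_sum]
  refine Finset.sum_congr rfl fun a _ => Finset.sum_congr rfl fun cc _ => ?_
  ring

lemma chanOp_sum {ι : Type*} (s : Finset ι) (M : Matrix (V × A) (V × A) ℂ)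
    (ρ : ι → Matrix (A × B) (A × B) ℂ) :
    chanOp M (∑ i ∈ s, ρ i) = ∑ i ∈ s, chanOp M (ρ i) := by
  classical
  induction s using Finset.induction with
  | empty => simp [chanOp_zero]
  | insert _ _ h ih => simp [Finset.sum_insert h, chanOp_add, ih]

lemma chanOp_sum_left {ι : Type*} (s : Finset ι) (M : ι → Matrix (V × A) (V × A) ℂ)
    (ρ : Matrix (A × B) (A × B) ℂ) :
    chanOp (∑ i ∈ s, M i) ρ = ∑ i ∈ s, chanOp (M i) ρ := by
  ext ⟨v, b⟩ ⟨v', b'⟩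
  simp only [chanOp_apply, Matrix.sum_apply, Finset.sum_mul]
  trans (∑ a : A, ∑ i ∈ s, ∑ c : A, M i (v, a) (v', c) * ρ (c, b) (a, b'))
  · exact Finset.sum_congr rfl fun a _ => Finset.sum_comm
  · exact Finset.sum_comm

lemma chanOp_one (ρ : Matrix (A × B) (A × B) ℂ) [DecidableEq A] :
    chanOp (1 : Matrix (V × A) (V × A) ℂ) ρ = (1 : Matrix V V ℂ) ⊗ₖ ptrace₁ ρ := by
  ext ⟨v, b⟩ ⟨v', b'⟩
  rw [chanOp_apply]
  simp [Matrix.one_apply, Matrix.kroneckerMap_apply, ptrace₁, Prod.ext_iff, ite_and,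
    Finset.sum_ite_eq, Finset.sum_ite_eq', Finset.mul_sum]

lemma chanOp_kron (M : Matrix (V × A) (V × A) ℂ) (τ : Matrix A A ℂ) (χ : Matrix B B ℂ) :
    chanOp M (τ ⊗ₖ χ) = margOp M τ ⊗ₖ χ := by
  ext ⟨v, b⟩ ⟨v', b'⟩
  simp only [chanOp_apply, margOp_apply, Matrix.kroneckerMap_apply, Finset.sum_mul]
  refine Finset.sum_congr rfl fun a _ => ?_
  refine Finset.sum_congr rfl fun c _ => ?_
  ring

lemma margOp_posSemidef {M : Matrix (V × A) (V × A) ℂ} {τ : Matrix A A ℂ}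
    (hM : M.PosSemidef) (hτ : τ.PosSemidef) : (margOp M τ).PosSemidef := by
  obtain ⟨L, hL⟩ : ∃ L, _ = Lᴴ * L := by
    classical
    open scoped MatrixOrder Matrix.Norms.L2Operator in exact CStarAlgebra.nonneg_iff_eq_star_mul_self.mp hM.nonneg
  obtain ⟨S, hS⟩ : ∃ S, _ = Sᴴ * S := by
    classical
    open scoped MatrixOrder Matrix.Norms.L2Operator in exact CStarAlgebra.nonneg_iff_eq_star_mul_self.mp hτ.nonneg
  have key : margOp M τ =
      (Matrix.of fun (mk : (V × A) × A) (v : V) => ∑ a, L mk.1 (v, a) * star (S mk.2 a))ᴴ *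
      (Matrix.of fun (mk : (V × A) × A) (v : V) => ∑ a, L mk.1 (v, a) * star (S mk.2 a)) := by
    ext v v'
    trans (∑ m : V × A, ∑ k : A, ∑ a : A, ∑ c : A,
      star (L m (v, a)) * S k a * (L m (v', c) * star (S k c)))
    · rw [margOp_apply]
      simp only [hL, hS, Matrix.mul_apply, Matrix.conjTranspose_apply]
      simp only [Fintype.sum_mul_sum]
      rw [sum4_swap]
      refine Finset.sum_congr rfl fun m _ => Finset.sum_congr rfl fun k _ =>
        Finset.sum_congr rfl fun a _ => Finset.sum_congr rfl fun c _ => ?_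
      ring
    · conv_rhs => rw [Matrix.mul_apply, Fintype.sum_prod_type]
      simp only [Matrix.conjTranspose_apply, Matrix.of_apply, star_sum, star_mul', star_star]
      simp only [Fintype.sum_mul_sum]
  rw [key]
  exact Matrix.posSemidef_conjTranspose_mul_self _

lemma ptranspose₁_chanOp_posSemidef {M : Matrix (V × A) (V × A) ℂ}
    {ρ : Matrix (A × B) (A × B) ℂ} (hM : M.PosSemidef) (hρ : ρ.PosSemidef) :
    (ptranspose₁ (chanOp M ρ)).PosSemidef := by
  obtain ⟨L, hL⟩ : ∃ L, _ = Lᴴ * L := by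
    classical
    open scoped MatrixOrder Matrix.Norms.L2Operator in exact CStarAlgebra.nonneg_iff_eq_star_mul_self.mp hM.nonneg
  obtain ⟨R, hR⟩ : ∃ R, _ = Rᴴ * R := by
    classical
    open scoped MatrixOrder Matrix.Norms.L2Operator in exact CStarAlgebra.nonneg_iff_eq_star_mul_self.mp hρ.nonneg
  have key : ptranspose₁ (chanOp M ρ) =
      (Matrix.of fun (mk : (V × A) × (A × B)) (p : V × B) =>
        ∑ c, star (L mk.1 (p.1, c)) * R mk.2 (c, p.2))ᴴ *
      (Matrix.of fun (mk : (V × A) × (A × B)) (p : V × B) =>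
        ∑ c, star (L mk.1 (p.1, c)) * R mk.2 (c, p.2)) := by
    ext ⟨v, b⟩ ⟨v', b'⟩
    have lhs : ptranspose₁ (chanOp M ρ) (v, b) (v', b') =
        ∑ a, ∑ c, M (v', a) (v, c) * ρ (c, b) (a, b') := by
      simp [ptranspose₁, chanOp_apply]
    rw [lhs]
    trans (∑ m : V × A, ∑ k : A × B, ∑ a : A, ∑ c : A,
      star (L m (v', a)) * R k (a, b') * (L m (v, c) * star (R k (c, b))))
    · simp only [hL, hR, Matrix.mul_apply, Matrix.conjTranspose_apply]
      simp only [Fintype.sum_mul_sum]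
      rw [sum4_swap]
      refine Finset.sum_congr rfl fun m _ => Finset.sum_congr rfl fun k _ =>
        Finset.sum_congr rfl fun a _ => Finset.sum_congr rfl fun c _ => ?_
      ring
    · conv_rhs => rw [Matrix.mul_apply, Fintype.sum_prod_type]
      simp only [Matrix.conjTranspose_apply, Matrix.of_apply, star_sum, star_mul', star_star]
      simp only [Fintype.sum_mul_sum]
      refine Finset.sum_congr rfl fun m _ => Finset.sum_congr rfl fun k _ => ?_
      rw [Finset.sum_comm]
      refine Finset.sum_congr rfl fun a _ => Finset.sum_congr rfl fun c _ => ?_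
      ring
  rw [key]
  exact Matrix.posSemidef_conjTranspose_mul_self _

lemma kron_posSemidef {τ : Matrix A A ℂ} {χ : Matrix B B ℂ}
    (hτ : τ.PosSemidef) (hχ : χ.PosSemidef) : (τ ⊗ₖ χ).PosSemidef := by
  obtain ⟨S, hS⟩ : ∃ S, _ = Sᴴ * S := by
    classical
    open scoped MatrixOrder Matrix.Norms.L2Operator in exact CStarAlgebra.nonneg_iff_eq_star_mul_self.mp hτ.nonneg
  obtain ⟨T, hT⟩ : ∃ T, _ = Tᴴ * T := by
    classical
    open scoped MatrixOrder Matrix.Norms.L2Operator in exact CStarAlgebra.nonneg_iff_eq_star_mul_self.mp hχ.nonneg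
  have key : τ ⊗ₖ χ = (S ⊗ₖ T)ᴴ * (S ⊗ₖ T) := by
    ext ⟨v, b⟩ ⟨v', b'⟩
    trans (∑ k : A, ∑ l : B, star (S k v) * star (T l b) * (S k v' * T l b'))
    · simp only [hS, hT, Matrix.kroneckerMap_apply, Matrix.mul_apply,
        Matrix.conjTranspose_apply]
      rw [Fintype.sum_mul_sum]
      refine Finset.sum_congr rfl fun k _ => Finset.sum_congr rfl fun l _ => ?_
      ring
    · conv_rhs => rw [Matrix.mul_apply, Fintype.sum_prod_type]
      simp only [Matrix.conjTranspose_apply, Matrix.kroneckerMap_apply, star_mul']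
  rw [key]
  exact Matrix.posSemidef_conjTranspose_mul_self _

lemma posSemidef_add {n : Type*} [Fintype n] {X Y : Matrix n n ℂ}
    (hX : X.PosSemidef) (hY : Y.PosSemidef) : (X + Y).PosSemidef := by
  exact hX.add hY

lemma posSemidef_sum {n ι : Type*} [Fintype n] (s : Finset ι) (f : ι → Matrix n n ℂ)
    (h : ∀ i ∈ s, (f i).PosSemidef) : (∑ i ∈ s, f i).PosSemidef := by
  classical
  induction s using Finset.induction with
  | empty => simpa using Matrix.PosSemidef.zero
  | @insert j s hj ih =>
    rw [Finset.sum_insert hj]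
    exact posSemidef_add (h j (Finset.mem_insert_self _ _))
      (ih fun i hi => h i (Finset.mem_insert_of_mem hi))

lemma ptrace₁_sum {ι : Type*} (s : Finset ι) (N : ι → Matrix (V × B) (V × B) ℂ) :
    ptrace₁ (∑ i ∈ s, N i) = ∑ i ∈ s, ptrace₁ (N i) := by
  ext b b'
  simp [ptrace₁, Matrix.sum_apply]
  rw [Finset.sum_comm]

lemma real_smul_posSemidef {n : Type*} [Fintype n] {r : ℝ} (hr : 0 ≤ r)
    {X : Matrix n n ℂ} (hX : X.PosSemidef) : (((r : ℂ)) • X).PosSemidef := by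
  constructor
  · unfold Matrix.IsHermitian
    rw [Matrix.conjTranspose_smul, hX.1, Complex.star_def, Complex.conj_ofReal]
  · exact (hX.smul (a := (r : ℂ)) (by rw [Complex.le_def]; simp [hr])).2

lemma marginal_lemma {σB : Matrix B B ℂ} {ω : Matrix V V ℂ} (hω : ω.trace = 1) :
    ptrace₁ (((1 : Matrix V V ℂ) ⊗ₖ σB) * (ω ⊗ₖ (1 : Matrix B B ℂ))) = σB := by
  ext b b'
  rw [ptrace₁_mul_kron_apply]
  simp only [Matrix.kroneckerMap_apply, Matrix.one_apply, ite_mul, one_mul, zero_mul,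
    Finset.sum_ite_eq, Finset.mem_univ, if_true]
  rw [← Finset.mul_sum]
  have ht : ∑ v, ω v v = ω.trace := rfl
  rw [ht, hω, mul_one]


end Aux

theorem TW_le_epsBSA' {A B ι X : Type*}
    [Fintype A] [Fintype B] [Fintype ι] [DecidableEq A] [DecidableEq B]
    (d : ℕ) (hd : 1 ≤ d)
    (ρ : Matrix (A × B) (A × B) ℂ) (hρ : IsState ρ)
    (M : ι → Matrix (Fin d × A) (Fin d × A) ℂ)
    (hM : ∀ a, (M a).PosSemidef) (hMsum : (∑ a, M a) = 1)
    (ω : X → Matrix (Fin d) (Fin d) ℂ) (hω : ∀ x, IsState (ω x)) :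
    TW ω (fun a x => teleA (M a) ρ (ω x)) ≤ epsBSA ρ := by
  classical
  have hAB : Nonempty (A × B) := by
    by_contra h
    rw [not_nonempty_iff] at h
    have h1 := hρ.2
    rw [Matrix.trace] at h1
    simp at h1
  obtain ⟨⟨a0, b0⟩⟩ := hAB
  haveI : Nonempty A := ⟨a0⟩
  haveI : Nonempty B := ⟨b0⟩
  unfold TW epsBSA
  refine csInf_le_csInf ⟨0, fun q hq => hq.1⟩ ?_ ?_
  · -- nonempty of the epsBSA feasible set
    have hcA : ((Fintype.card A : ℂ))⁻¹ • (1 : Matrix A A ℂ) =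
        ((((Fintype.card A : ℝ)⁻¹ : ℝ) : ℂ)) • 1 := by push_cast; rfl
    have hcB : ((Fintype.card B : ℂ))⁻¹ • (1 : Matrix B B ℂ) =
        ((((Fintype.card B : ℝ)⁻¹ : ℝ) : ℂ)) • 1 := by push_cast; rfl
    have hpsA : (((Fintype.card A : ℂ))⁻¹ • (1 : Matrix A A ℂ)).PosSemidef := by
      rw [hcA]
      exact real_smul_posSemidef (by positivity) Matrix.PosSemidef.one
    have hpsB : (((Fintype.card B : ℂ))⁻¹ • (1 : Matrix B B ℂ)).PosSemidef := by
      rw [hcB]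
      exact real_smul_posSemidef (by positivity) Matrix.PosSemidef.one
    refine ⟨1, zero_le_one, le_refl 1,
      ρ, (((Fintype.card A : ℂ))⁻¹ • (1 : Matrix A A ℂ)) ⊗ₖ
        (((Fintype.card B : ℂ))⁻¹ • (1 : Matrix B B ℂ)), hρ, ⟨?_, ?_⟩, ?_, ?_⟩
    · exact kron_posSemidef hpsA hpsB
    · rw [Matrix.trace_kronecker]
      simp [Matrix.trace_smul, Matrix.trace_one, smul_eq_mul]
    · exact ⟨1, fun _ => ((Fintype.card A : ℂ))⁻¹ • 1,
        fun _ => ((Fintype.card B : ℂ))⁻¹ • 1, fun _ => hpsA, fun _ => hpsB,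
        by rw [Fin.sum_univ_one]⟩
    · norm_num
  · rintro p ⟨hp0, hp1, ρs, σS, hρs, hσSstate, hσSsep, hdec⟩
    refine ⟨hp0, hp1, fun a => chanOp (M a) ρs, fun a => chanOp (M a) σS, ?_, ?_, ?_, ?_⟩
    · intro a
      show (chanOp (M a) σS).PosSemidef ∧ Separable (chanOp (M a) σS)
      obtain ⟨n, τ, χ, hτ, hχ, hEq⟩ := hσSsep
      have hform : chanOp (M a) σS = ∑ i, margOp (M a) (τ i) ⊗ₖ χ i := by
        rw [hEq, chanOp_sum]
        exact Finset.sum_congr rfl fun i _ => chanOp_kron _ _ _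
      constructor
      · rw [hform]
        exact posSemidef_sum _ _ fun i _ =>
          kron_posSemidef (margOp_posSemidef (hM a) (hτ i)) (hχ i)
      · exact ⟨n, fun i => margOp (M a) (τ i), χ,
          fun i => margOp_posSemidef (hM a) (hτ i), hχ, hform⟩
    · exact fun a => ptranspose₁_chanOp_posSemidef (hM a) hρs.1
    · intro x x'
      beta_reduce
      have key : ∀ y, (∑ a, ptrace₁ (chanOp (M a) ρs *
          (ω y ⊗ₖ (1 : Matrix B B ℂ)))) = ptrace₁ ρs := by
        intro y
        rw [← ptrace₁_sum, ← Matrix.sum_mul, ← chanOp_sum_left, hMsum, chanOp_one]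
        exact marginal_lemma (hω y).2
      rw [key x, key x']
    · intro a x
      have hcomb : (((p : ℝ)) : ℂ) • chanOp (M a) ρs +
          (((1 - p : ℝ)) : ℂ) • chanOp (M a) σS = chanOp (M a) ρ := by
        rw [← chanOp_smul, ← chanOp_smul, ← chanOp_add, ← hdec]
      show teleA (M a) ρ (ω x) = _
      beta_reduce
      rw [hcomb, ← teleA_eq]


/-- TW({σ_{a|ω_x}}) ≤ ε_BSA(ρ^{AB}). -/
theorem TW_le_epsBSA {A B ι X : Type*}
    [Fintype A] [Fintype B] [Fintype ι] [DecidableEq A] [DecidableEq B]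
    (d : ℕ) (hd : 1 ≤ d)
    (ρ : Matrix (A × B) (A × B) ℂ) (hρ : IsState ρ)
    (M : ι → Matrix (Fin d × A) (Fin d × A) ℂ)
    (hM : ∀ a, (M a).PosSemidef) (hMsum : (∑ a, M a) = 1)
    (ω : X → Matrix (Fin d) (Fin d) ℂ) (hω : ∀ x, IsState (ω x)) :
    TW ω (fun a x => teleA (M a) ρ (ω x)) ≤ epsBSA ρ :=
  TW_le_epsBSA' d hd ρ hρ M hM hMsum ω hω

end Tele
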